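/- Let f be a non-autonomous dynamical system on a compact metric space M such that the family (f_i)_{i∈ℤ} is uniformly equicontinuous, and fix n ≥ 1. Define the gathering f̃ by f̃_i = f_{n(i+1)-1} ∘ ⋯ ∘ f_{ni+1} ∘ f_{ni} for each i ∈ ℤ. Then H_i(f̃) = n · H_{ni}(f) for every i ∈ ℤ. -/

import Mathlib

open Filter Topology Set

variable {M : Type*} {N : Type*}

/-- The `n`-th composition `f_i^n = f_{i+n-1} ∘ ⋯ ∘ f_i` of a non-autonomous
dynamical system `f = (f_i)_{i ∈ ℤ}` of homeomorphisms of `M`. -/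
def nsIter [TopologicalSpace M] (f : ℤ → M ≃ₜ M) (i : ℤ) : ℕ → M → M
  | 0 => id
  | n + 1 => (f (i + n)) ∘ nsIter f i n

/-- `K` is an `(n, ε)`-spanning set for `f` at time `i`. -/
def IsSpanningSet [PseudoMetricSpace M] (f : ℤ → M ≃ₜ M) (i : ℤ) (n : ℕ) (ε : ℝ)
    (K : Set M) : Prop :=
  ∀ x : M, ∃ y ∈ K, ∀ j < n, dist (nsIter f i j x) (nsIter f i j y) < ε

/-- `E` is an `(n, ε)`-separated set for `f` at time `i`. -/
def IsSeparatedSet [PseudoMetricSpace M] (f : ℤ → M ≃ₜ M) (i : ℤ) (n : ℕ) (ε : ℝ)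
    (E : Set M) : Prop :=
  ∀ x ∈ E, ∀ y ∈ E, x ≠ y → ∃ j < n, ε < dist (nsIter f i j x) (nsIter f i j y)

/-- `r[n,i](ε,f)`: the smallest cardinality of a finite `(n, ε)`-spanning set at time `i`. -/
noncomputable def rSpan [PseudoMetricSpace M] (f : ℤ → M ≃ₜ M) (i : ℤ) (n : ℕ) (ε : ℝ) : ℕ :=
  sInf {k | ∃ K : Finset M, K.card = k ∧ IsSpanningSet f i n ε ↑K}

/-- `s[n,i](ε,f)`: the largest cardinality of an `(n, ε)`-separated set at time `i`. -/
noncomputable def sSep [PseudoMetricSpace M] (f : ℤ → M ≃ₜ M) (i : ℤ) (n : ℕ) (ε : ℝ) : ℕ :=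
  sSup {k | ∃ E : Finset M, E.card = k ∧ IsSeparatedSet f i n ε ↑E}

/-- `r[i](ε,f) = limsup_{n → ∞} (1/n) log r[n,i](ε,f)`. -/
noncomputable def rGrowth [PseudoMetricSpace M] (f : ℤ → M ≃ₜ M) (i : ℤ) (ε : ℝ) : EReal :=
  Filter.atTop.limsup fun n : ℕ => ((Real.log (rSpan f i n ε) / n : ℝ) : EReal)

/-- `s[i](ε,f) = limsup_{n → ∞} (1/n) log s[n,i](ε,f)`. -/
noncomputable def sGrowth [PseudoMetricSpace M] (f : ℤ → M ≃ₜ M) (i : ℤ) (ε : ℝ) : EReal :=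
  Filter.atTop.limsup fun n : ℕ => ((Real.log (sSep f i n ε) / n : ℝ) : EReal)

/-- The topological entropy `H_i(f) = lim_{ε → 0⁺} r[i](ε,f)`; since `ε ↦ r[i](ε,f)` is
antitone, this one-sided limit equals the supremum over `ε > 0`. -/
noncomputable def nsEntropy [PseudoMetricSpace M] (f : ℤ → M ≃ₜ M) (i : ℤ) : EReal :=
  ⨆ (ε : ℝ) (_ : 0 < ε), rGrowth f i ε

section Auxiliary

set_option linter.unusedSectionVars false

lemma nsIter_add [TopologicalSpace N] (f : ℤ → N ≃ₜ N) (i : ℤ) (a b : ℕ) (x : N) :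
    nsIter f i (a + b) x = nsIter f (i + a) b (nsIter f i a x) := by
  induction b with
  | zero => rfl
  | succ b ih =>
    show (f (i + ↑(a + b))) (nsIter f i (a + b) x)
      = (f (i + a + b)) (nsIter f (i + a) b (nsIter f i a x))
    rw [ih]; congr 2; push_cast; ring

lemma nsIter_one [TopologicalSpace N] (f : ℤ → N ≃ₜ N) (i : ℤ) (x : N) :
    nsIter f i 1 x = f i x := by
  show (f (i + ((0:ℕ):ℤ))) (nsIter f i 0 x) = f i x
  norm_num; rfl

lemma continuous_nsIter [TopologicalSpace N] (f : ℤ → N ≃ₜ N) (i : ℤ) (k : ℕ) :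
    Continuous (nsIter f i k) := by
  induction k with
  | zero => exact continuous_id
  | succ k ih => exact ((f (i + k)).continuous).comp ih

variable [MetricSpace M] [CompactSpace M]

lemma exists_spanning (f : ℤ → M ≃ₜ M) (i : ℤ) (k : ℕ) {ε : ℝ} (hε : 0 < ε) :
    ∃ K : Finset M, IsSpanningSet f i k ε ↑K := by
  obtain ⟨t, ht⟩ := IsCompact.elim_finite_subcover (isCompact_univ (X := M))
    (fun y : M => {x | ∀ j < k, dist (nsIter f i j x) (nsIter f i j y) < ε})
    (fun y => by
      show IsOpen {x | ∀ j < k, dist (nsIter f i j x) (nsIter f i j y) < ε}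
      have : {x | ∀ j < k, dist (nsIter f i j x) (nsIter f i j y) < ε}
          = ⋂ j ∈ Finset.range k, (nsIter f i j) ⁻¹' Metric.ball (nsIter f i j y) ε := by
        ext x; simp [Metric.mem_ball]
      rw [this]
      exact isOpen_biInter_finset fun j _ =>
        (Metric.isOpen_ball).preimage (continuous_nsIter f i j))
    (fun x _ => mem_iUnion.2 ⟨x, fun j _ => by simp [hε]⟩)
  refine ⟨t, fun x => ?_⟩
  have := ht (mem_univ x)
  simp only [mem_iUnion, mem_setOf_eq] at this
  obtain ⟨y, hy, hxy⟩ := this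
  exact ⟨y, hy, hxy⟩

lemma rSpan_le {f : ℤ → M ≃ₜ M} {i : ℤ} {k : ℕ} {ε : ℝ} {K : Finset M}
    (h : IsSpanningSet f i k ε ↑K) : rSpan f i k ε ≤ K.card :=
  Nat.sInf_le ⟨K, rfl, h⟩

lemma exists_spanning_card (f : ℤ → M ≃ₜ M) (i : ℤ) (k : ℕ) {ε : ℝ} (hε : 0 < ε) :
    ∃ K : Finset M, K.card = rSpan f i k ε ∧ IsSpanningSet f i k ε ↑K := by
  have hne : {m | ∃ K : Finset M, K.card = m ∧ IsSpanningSet f i k ε ↑K}.Nonempty := by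
    obtain ⟨K, hK⟩ := exists_spanning f i k hε
    exact ⟨K.card, K, rfl, hK⟩
  exact Nat.sInf_mem hne

lemma rSpan_mono (f : ℤ → M ≃ₜ M) (i : ℤ) {k k' : ℕ} (h : k ≤ k') {ε : ℝ} (hε : 0 < ε) :
    rSpan f i k ε ≤ rSpan f i k' ε := by
  obtain ⟨K, hcard, hK⟩ := exists_spanning_card f i k' hε
  refine hcard ▸ rSpan_le fun x => ?_
  obtain ⟨y, hy, hd⟩ := hK x
  exact ⟨y, hy, fun j hj => hd j (hj.trans_le h)⟩

lemma equi_iter (f : ℤ → M ≃ₜ M)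
    (hequi : ∀ ε > (0 : ℝ), ∃ δ > (0 : ℝ), ∀ i : ℤ, ∀ x y : M,
      dist x y < δ → dist (f i x) (f i y) < ε)
    {ε : ℝ} (hε : 0 < ε) (n : ℕ) :
    ∃ δ > (0:ℝ), ∀ (j : ℤ) (k : ℕ), k ≤ n → ∀ x y : M, dist x y < δ →
      dist (nsIter f j k x) (nsIter f j k y) < ε := by
  induction n with
  | zero =>
    exact ⟨ε, hε, fun j k hk x y h => by
      interval_cases k
      simpa [nsIter] using h⟩
  | succ n ih =>
    obtain ⟨δ, hδ, hδ'⟩ := ih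
    obtain ⟨δ', hδ'0, hδ''⟩ := hequi δ hδ
    refine ⟨min δ' δ, lt_min hδ'0 hδ, fun j k hk x y h => ?_⟩
    rcases Nat.lt_or_ge k (n + 1) with hk' | hk'
    · exact hδ' j k (Nat.lt_succ_iff.mp hk') x y (h.trans_le (min_le_right _ _))
    · have hk2 : k = n + 1 := le_antisymm hk hk'
      subst hk2
      have h1 : dist (f j x) (f j y) < δ := hδ'' j x y (h.trans_le (min_le_left _ _))
      have e1 : ∀ z : M, nsIter f j (n + 1) z = nsIter f (j + 1) n (f j z) := by
        intro z
        have h2 := nsIter_add f j 1 n z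
        rw [Nat.add_comm 1 n] at h2
        rw [h2, nsIter_one]
        norm_num
      rw [e1 x, e1 y]
      exact hδ' (j + 1) n le_rfl _ _ h1

lemma nsIter_gathering (f g : ℤ → M ≃ₜ M) (n : ℕ)
    (hg : ∀ i : ℤ, ∀ x : M, g i x = nsIter f ((n : ℤ) * i) n x) (i : ℤ) (m : ℕ) (x : M) :
    nsIter g i m x = nsIter f ((n : ℤ) * i) (n * m) x := by
  induction m with
  | zero => rw [Nat.mul_zero]; rfl
  | succ m ih =>
    show g (i + m) (nsIter g i m x) = _
    rw [hg, ih]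
    have h2 : nsIter f ((n:ℤ) * i) (n * m + n) x
        = nsIter f ((n:ℤ) * i + ↑(n * m)) n (nsIter f ((n:ℤ) * i) (n * m) x) :=
      nsIter_add f _ _ _ x
    rw [show n * (m + 1) = n * m + n by ring, h2]
    have h3 : (n:ℤ) * (i + m) = (n:ℤ) * i + ↑(n * m) := by push_cast; ring
    rw [h3]

lemma log_nat_nonneg (k : ℕ) : 0 ≤ Real.log k := by
  rcases Nat.eq_zero_or_pos k with h | h
  · simp [h]
  · exact Real.log_nonneg (by exact_mod_cast h)

lemma log_nat_mono {a b : ℕ} (h : a ≤ b) : Real.log a ≤ Real.log b := by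
  rcases Nat.eq_zero_or_pos a with h0 | h0
  · rw [h0]; simpa using log_nat_nonneg b
  · exact Real.log_le_log (by exact_mod_cast h0) (by exact_mod_cast h)

lemma rGrowth_nonneg (f : ℤ → M ≃ₜ M) (i : ℤ) (ε : ℝ) : 0 ≤ rGrowth f i ε := by
  have h0 : (0:EReal) = Filter.atTop.limsup (fun _ : ℕ => (0:EReal)) := (limsup_const _).symm
  rw [rGrowth, h0]
  refine limsup_le_limsup (Eventually.of_forall fun k => ?_)
  exact EReal.coe_nonneg.mpr (div_nonneg (log_nat_nonneg _) (Nat.cast_nonneg k))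

lemma rSpan_g_le (f g : ℤ → M ≃ₜ M) (n : ℕ) (hn : 1 ≤ n)
    (hg : ∀ i : ℤ, ∀ x : M, g i x = nsIter f ((n : ℤ) * i) n x)
    (i : ℤ) (m : ℕ) {ε : ℝ} (hε : 0 < ε) :
    rSpan g i m ε ≤ rSpan f ((n:ℤ) * i) (n * m) ε := by
  obtain ⟨K, hcard, hK⟩ := exists_spanning_card f ((n:ℤ) * i) (n * m) hε
  refine hcard ▸ rSpan_le fun x => ?_
  obtain ⟨y, hy, hd⟩ := hK x
  refine ⟨y, hy, fun j hj => ?_⟩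
  rw [nsIter_gathering f g n hg, nsIter_gathering f g n hg]
  exact hd (n * j) (mul_lt_mul_of_pos_left hj (by omega))

lemma rSpan_f_le (f g : ℤ → M ≃ₜ M) (n : ℕ) (hn : 1 ≤ n)
    (hg : ∀ i : ℤ, ∀ x : M, g i x = nsIter f ((n : ℤ) * i) n x)
    {ε δ : ℝ} (hδ : 0 < δ)
    (hprop : ∀ (j : ℤ) (k : ℕ), k ≤ n - 1 → ∀ x y : M, dist x y < δ →
      dist (nsIter f j k x) (nsIter f j k y) < ε)
    (i : ℤ) (m : ℕ) :
    rSpan f ((n:ℤ) * i) (n * m) ε ≤ rSpan g i m δ := by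
  obtain ⟨K, hcard, hK⟩ := exists_spanning_card g i m hδ
  refine hcard ▸ rSpan_le fun x => ?_
  obtain ⟨y, hy, hd⟩ := hK x
  refine ⟨y, hy, fun t ht => ?_⟩
  have hqm : t / n < m := Nat.div_lt_of_lt_mul ht
  have hteq : n * (t / n) + t % n = t := Nat.div_add_mod t n
  have e : ∀ z : M, nsIter f ((n:ℤ) * i) t z
      = nsIter f ((n:ℤ) * i + ↑(n * (t / n))) (t % n) (nsIter f ((n:ℤ) * i) (n * (t / n)) z) := by
    intro z
    conv_lhs => rw [← hteq]
    exact nsIter_add f _ _ _ z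
  rw [e x, e y]
  have hdist : dist (nsIter f ((n:ℤ) * i) (n * (t / n)) x)
      (nsIter f ((n:ℤ) * i) (n * (t / n)) y) < δ := by
    rw [← nsIter_gathering f g n hg, ← nsIter_gathering f g n hg]
    exact hd (t / n) hqm
  have hsn : t % n < n := Nat.mod_lt t (by omega)
  exact hprop _ (t % n) (by omega) _ _ hdist

lemma ereal_nat_mul_div (n : ℕ) (hn : 1 ≤ n) (z : ℝ) :
    (n : EReal) * ((z / n : ℝ) : EReal) = (z : EReal) := by
  rw [show (n : EReal) = ((n : ℝ) : EReal) by norm_cast, ← EReal.coe_mul]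
  congr 1
  field_simp

lemma growth_le (f g : ℤ → M ≃ₜ M) (n : ℕ) (hn : 1 ≤ n)
    (hg : ∀ i : ℤ, ∀ x : M, g i x = nsIter f ((n : ℤ) * i) n x)
    (i : ℤ) {ε : ℝ} (hε : 0 < ε) :
    rGrowth g i ε ≤ (n : EReal) * rGrowth f ((n:ℤ) * i) ε := by
  rw [← EReal.le_of_forall_lt_iff_le]
  intro z hz
  have hF0 : 0 ≤ rGrowth f ((n:ℤ) * i) ε := rGrowth_nonneg f _ ε
  have hn0 : (0:EReal) < (n:EReal) := by exact_mod_cast (by omega : 0 < n)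
  have hz0 : (0:ℝ) < z := by
    have h1 : (0:EReal) < (z:EReal) := lt_of_le_of_lt (mul_nonneg hn0.le hF0) hz
    exact_mod_cast h1
  have hFlt : rGrowth f ((n:ℤ) * i) ε < ((z / n : ℝ) : EReal) := by
    by_contra hcon
    push_neg at hcon
    have h1 : (n:EReal) * ((z/n:ℝ):EReal) ≤ (n:EReal) * rGrowth f ((n:ℤ) * i) ε :=
      mul_le_mul_of_nonneg_left hcon hn0.le
    rw [ereal_nat_mul_div n hn z] at h1
    exact absurd (lt_of_le_of_lt h1 hz) (lt_irrefl _)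
  obtain ⟨K, hK⟩ := eventually_atTop.mp (eventually_lt_of_limsup_lt hFlt)
  have hev : ∀ᶠ m : ℕ in atTop,
      ((Real.log (rSpan g i m ε) / m : ℝ) : EReal) ≤ (z : EReal) := by
    filter_upwards [eventually_ge_atTop (max K 1)] with m hm
    have hm1 : 1 ≤ m := le_trans (le_max_right _ _) hm
    have hmK : K ≤ n * m :=
      le_trans (le_trans (le_max_left _ _) hm) (Nat.le_mul_of_pos_left m (by omega))
    have h1 := hK (n * m) hmK
    rw [EReal.coe_lt_coe_iff] at h1
    have hnm1 : (0:ℝ) < ((n * m : ℕ) : ℝ) := by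
      exact_mod_cast Nat.mul_pos (by omega) (by omega)
    have h2 : Real.log (rSpan f ((n:ℤ) * i) (n * m) ε) < (z / n) * ((n * m : ℕ) : ℝ) := by
      rwa [div_lt_iff₀ hnm1] at h1
    have h3 : Real.log (rSpan g i m ε) ≤ Real.log (rSpan f ((n:ℤ) * i) (n * m) ε) :=
      log_nat_mono (rSpan_g_le f g n hn hg i m hε)
    rw [EReal.coe_le_coe_iff]
    have hm0 : (0:ℝ) < (m:ℝ) := by exact_mod_cast hm1
    rw [div_le_iff₀ hm0]
    have hne : (n:ℝ) ≠ 0 := by positivity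
    calc Real.log (rSpan g i m ε)
        ≤ Real.log (rSpan f ((n:ℤ) * i) (n * m) ε) := h3
      _ ≤ (z / n) * ((n * m : ℕ) : ℝ) := h2.le
      _ = z * m := by push_cast; field_simp
  calc rGrowth g i ε ≤ Filter.atTop.limsup (fun _ : ℕ => (z:EReal)) := limsup_le_limsup hev
    _ = (z:EReal) := limsup_const _

lemma growth_ge (f g : ℤ → M ≃ₜ M) (n : ℕ) (hn : 1 ≤ n)
    (hg : ∀ i : ℤ, ∀ x : M, g i x = nsIter f ((n : ℤ) * i) n x)
    {ε δ : ℝ} (hε : 0 < ε) (hδ : 0 < δ)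
    (hprop : ∀ (j : ℤ) (k : ℕ), k ≤ n - 1 → ∀ x y : M, dist x y < δ →
      dist (nsIter f j k x) (nsIter f j k y) < ε)
    (i : ℤ) :
    (n : EReal) * rGrowth f ((n:ℤ) * i) ε ≤ rGrowth g i δ := by
  rw [← EReal.le_of_forall_lt_iff_le]
  intro z hz
  have hn0 : (0:EReal) < (n:EReal) := by exact_mod_cast (by omega : 0 < n)
  have hG0 : 0 ≤ rGrowth g i δ := rGrowth_nonneg g i δ
  have hz0 : (0:ℝ) < z := by
    have h1 : (0:EReal) < (z:EReal) := lt_of_le_of_lt hG0 hz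
    exact_mod_cast h1
  obtain ⟨K, hK⟩ := eventually_atTop.mp (eventually_lt_of_limsup_lt hz)
  have hFle : rGrowth f ((n:ℤ) * i) ε ≤ ((z / n : ℝ) : EReal) := by
    have hub : ∀ᶠ k : ℕ in atTop,
        ((Real.log (rSpan f ((n:ℤ) * i) k ε) / k : ℝ) : EReal)
          ≤ (((z / n + z / k : ℝ)) : EReal) := by
      filter_upwards [eventually_ge_atTop (max (n * K) 1)] with k hk
      have hk1 : 1 ≤ k := le_trans (le_max_right _ _) hk
      have hkK : n * K ≤ k := le_trans (le_max_left _ _) hk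
      have hmK : K ≤ k / n + 1 := by
        have h5 : K ≤ k / n := (Nat.le_div_iff_mul_le (by omega)).mpr
          (by rwa [Nat.mul_comm] at hkK)
        omega
      have hkm : k < n * (k / n + 1) := by
        have h1 := Nat.div_add_mod k n
        have h2 : k % n < n := Nat.mod_lt k (by omega)
        have h3 : n * (k / n + 1) = n * (k / n) + n := by ring
        omega
      have hBm := hK (k / n + 1) hmK
      rw [EReal.coe_lt_coe_iff] at hBm
      have hm0 : (0:ℝ) < ((k / n + 1 : ℕ) : ℝ) := by exact_mod_cast Nat.succ_pos _
      have hB : Real.log (rSpan g i (k / n + 1) δ) < z * ((k / n + 1 : ℕ) : ℝ) := by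
        rwa [div_lt_iff₀ hm0] at hBm
      have hA : Real.log (rSpan f ((n:ℤ) * i) k ε) ≤ Real.log (rSpan g i (k / n + 1) δ) :=
        le_trans (log_nat_mono (rSpan_mono f _ hkm.le hε))
          (log_nat_mono (rSpan_f_le f g n hn hg hδ hprop i (k / n + 1)))
      rw [EReal.coe_le_coe_iff]
      have hk0 : (0:ℝ) < (k:ℝ) := by exact_mod_cast hk1
      rw [div_le_iff₀ hk0]
      have hmle : ((k / n + 1 : ℕ) : ℝ) ≤ (k:ℝ) / n + 1 := by
        push_cast
        have h6 := Nat.cast_div_le (α := ℝ) (m := k) (n := n)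
        linarith
      have hne : (n:ℝ) ≠ 0 := by positivity
      have hke : (k:ℝ) ≠ 0 := ne_of_gt hk0
      calc Real.log (rSpan f ((n:ℤ) * i) k ε)
          ≤ Real.log (rSpan g i (k / n + 1) δ) := hA
        _ ≤ z * ((k / n + 1 : ℕ) : ℝ) := hB.le
        _ ≤ z * ((k:ℝ) / n + 1) := by nlinarith
        _ = (z / n + z / k) * k := by field_simp
    have hlim : Filter.atTop.limsup (fun k : ℕ => (((z / n + z / k : ℝ)) : EReal))
        = ((z / n : ℝ) : EReal) := by
      apply Filter.Tendsto.limsup_eq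
      rw [EReal.tendsto_coe]
      have h7 : Tendsto (fun k : ℕ => z / (k:ℝ)) atTop (𝓝 0) :=
        Tendsto.div_atTop tendsto_const_nhds tendsto_natCast_atTop_atTop
      simpa using (tendsto_const_nhds (x := z / n)).add h7
    calc rGrowth f ((n:ℤ) * i) ε ≤ _ := limsup_le_limsup hub
      _ = _ := hlim
  calc (n:EReal) * rGrowth f ((n:ℤ) * i) ε
      ≤ (n:EReal) * ((z / n : ℝ) : EReal) := mul_le_mul_of_nonneg_left hFle hn0.le
    _ = (z:EReal) := ereal_nat_mul_div n hn z

end Auxiliary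

/-- if the family `(f_i)_{i ∈ ℤ}` is uniformly equicontinuous and `g` is the
gathering `g_i = f_{n(i+1)-1} ∘ ⋯ ∘ f_{ni+1} ∘ f_{ni}` (i.e. `g_i = f_{ni}^n`) for a fixed
`n ≥ 1`, then `H_i(g) = n · H_{ni}(f)` for every `i ∈ ℤ`. -/
theorem nsEntropy_gathering [MetricSpace M] [CompactSpace M]
    (f : ℤ → M ≃ₜ M)
    (hequi : ∀ ε > (0 : ℝ), ∃ δ > (0 : ℝ), ∀ i : ℤ, ∀ x y : M,
      dist x y < δ → dist (f i x) (f i y) < ε)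
    (n : ℕ) (hn : 1 ≤ n) (g : ℤ → M ≃ₜ M)
    (hg : ∀ i : ℤ, ∀ x : M, g i x = nsIter f ((n : ℤ) * i) n x)
    (i : ℤ) : nsEntropy g i = (n : EReal) * nsEntropy f ((n : ℤ) * i) := by
  have hn0 : (0:EReal) < (n:EReal) := by exact_mod_cast (by omega : 0 < n)
  have hntop : (n:EReal) ≠ ⊤ := by
    rw [show (n:EReal) = ((n:ℝ):EReal) by norm_cast]
    exact EReal.coe_ne_top _
  apply le_antisymm
  · rw [nsEntropy]
    refine iSup₂_le fun ε hε => ?_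
    refine le_trans (growth_le f g n hn hg i hε) ?_
    refine mul_le_mul_of_nonneg_left ?_ hn0.le
    exact le_iSup₂ (f := fun ε (_ : 0 < ε) => rGrowth f ((n:ℤ) * i) ε) ε hε
  · rw [show (n:EReal) * nsEntropy f ((n:ℤ) * i) = nsEntropy f ((n:ℤ) * i) * (n:EReal) from
      mul_comm _ _, ← EReal.le_div_iff_mul_le hn0 hntop, nsEntropy]
    refine iSup₂_le fun ε hε => ?_
    rw [EReal.le_div_iff_mul_le hn0 hntop]
    obtain ⟨δ, hδ0, hprop⟩ := equi_iter f hequi hε (n - 1)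
    calc rGrowth f ((n:ℤ) * i) ε * (n:EReal)
        = (n:EReal) * rGrowth f ((n:ℤ) * i) ε := mul_comm _ _
      _ ≤ rGrowth g i δ := growth_ge f g n hn hg hε hδ0 hprop i
      _ ≤ nsEntropy g i := le_iSup₂ (f := fun ε (_ : 0 < ε) => rGrowth g i ε) δ hδ0
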